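/- With θ_0 as in the counterexample construction (θ_{0,i} = K n^{−(1/2+β)/(1+2β+2p)} for N ≤ i < 2N where N = n^{1/(1+2β+2p)}, zero on that range otherwise), and l a sequence with ∑_{i=j}^{j+K_0−1} l_i^2 ≥ R^{−2} j^{−1−2q} for j > j_0, the bias at smoothing level α ≥ β satisfies B_n^L(α) = |∑_{N ≤ i < 2N} l_i θ_{0,i} / (1 + n i^{−1−2α} κ_i^2)| ≥ c · n^{−(β+q)/(1+2β+2p)} for a constant c > 0 and all sufficiently large n, provided all l_i ≥ 0 on the block. -/

import Mathlib

open Real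
set_option maxHeartbeats 1000000

lemma blk_sum (l : ℕ → ℝ) (N K₀ : ℕ) (hK : 1 ≤ K₀) (B : ℕ) :
    ∑ i ∈ Finset.Ico N (N + B*K₀), l i
      = ∑ k ∈ Finset.range B, ∑ i ∈ Finset.Icc (N + k*K₀) (N + k*K₀ + K₀ - 1), l i := by
  induction B with
  | zero => simp
  | succ B ih =>
      have h1 : N ≤ N + B*K₀ := Nat.le_add_right _ _
      have hm : (B+1)*K₀ = B*K₀ + K₀ := by ring
      have h2 : N + B*K₀ ≤ N + (B+1)*K₀ := by omega
      rw [← Finset.sum_Ico_consecutive l h1 h2, ih, Finset.sum_range_succ]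
      congr 1
      have : N + (B+1)*K₀ = (N + B*K₀ + K₀ - 1).succ := by omega
      rw [← Finset.Ico_add_one_right_eq_Icc, this]
      rfl

lemma rpow_ratio_bound (x y e : ℝ) (hx : 1 ≤ x) (hxy : x ≤ y) (hy3 : y ≤ 3*x) :
    min 1 ((3:ℝ)^e) * x^e ≤ y^e := by
  have hx0 : (0:ℝ) < x := lt_of_lt_of_le one_pos hx
  have hy0 : (0:ℝ) < y := lt_of_lt_of_le hx0 hxy
  rcases le_or_gt e 0 with he | he
  · calc min 1 ((3:ℝ)^e) * x^e ≤ (3:ℝ)^e * x^e :=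
          mul_le_mul_of_nonneg_right (min_le_right _ _) (rpow_nonneg hx0.le e)
    _ = (3*x)^e := (mul_rpow (by norm_num) hx0.le).symm
    _ ≤ y^e := Real.rpow_le_rpow_of_nonpos hy0 hy3 he
  · calc min 1 ((3:ℝ)^e) * x^e ≤ 1 * x^e :=
          mul_le_mul_of_nonneg_right (min_le_left _ _) (rpow_nonneg hx0.le e)
    _ = x^e := one_mul _
    _ ≤ y^e := Real.rpow_le_rpow hx0.le hxy he.le

lemma block_lb (l : ℕ → ℝ) (R q : ℝ) (hR : 0 < R) (K₀ j : ℕ) (hj : 0 < j)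
    (hsum : (1/R^2) * (j:ℝ)^(-1-2*q) ≤ ∑ i ∈ Finset.Icc j (j+K₀-1), l i ^ 2)
    (hnn : ∀ i ∈ Finset.Icc j (j+K₀-1), 0 ≤ l i) :
    R⁻¹ * (j:ℝ)^((-1-2*q)/2) ≤ ∑ i ∈ Finset.Icc j (j+K₀-1), l i := by
  have hj0 : (0:ℝ) < j := by exact_mod_cast hj
  set a := ∑ i ∈ Finset.Icc j (j+K₀-1), l i with ha
  have hann : 0 ≤ a := Finset.sum_nonneg hnn
  have hb : 0 ≤ R⁻¹ * (j:ℝ)^((-1-2*q)/2) :=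
    mul_nonneg (inv_nonneg.2 hR.le) (rpow_nonneg hj0.le _)
  have hsq : (R⁻¹ * (j:ℝ)^((-1-2*q)/2))^2 = (1/R^2) * (j:ℝ)^(-1-2*q) := by
    rw [mul_pow, ← Real.rpow_natCast ((j:ℝ)^((-1-2*q)/2)) 2, ← Real.rpow_mul hj0.le]
    norm_num
  have h2 : (R⁻¹ * (j:ℝ)^((-1-2*q)/2))^2 ≤ a^2 := by
    rw [hsq]
    exact hsum.trans (Finset.sum_sq_le_sq_sum_of_nonneg hnn)
  nlinarith [h2, hb, hann]

theorem counterexample_bias_lower_bound (β p q R C Kamp α : ℝ) (K₀ j₀ : ℕ)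
    (hβ : 0 < β) (hp : 0 ≤ p) (hq : q < 1 / 2) (hR : 0 < R) (hC : 0 < C)
    (hKamp : 0 < Kamp) (hK₀ : 1 ≤ K₀) (hα : β ≤ α)
    (l κ : ℕ → ℝ)
    (hl : ∀ j : ℕ, j₀ < j →
      (1 / R ^ 2) * (j : ℝ) ^ (-1 - 2 * q) ≤ ∑ i ∈ Finset.Icc j (j + K₀ - 1), (l i) ^ 2)
    (hκ : ∀ i : ℕ, 1 ≤ i →
      C⁻¹ ^ 2 * (i : ℝ) ^ (-(2 * p)) ≤ (κ i) ^ 2 ∧ (κ i) ^ 2 ≤ C ^ 2 * (i : ℝ) ^ (-(2 * p))) :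
    ∃ c > 0, ∃ n₀ : ℝ, ∀ n : ℝ, n₀ ≤ n →
      (∀ i ∈ Finset.Ico ⌈n ^ (1 / (1 + 2 * β + 2 * p))⌉₊ ⌈2 * n ^ (1 / (1 + 2 * β + 2 * p))⌉₊,
        0 ≤ l i) →
      c * n ^ (-(β + q) / (1 + 2 * β + 2 * p)) ≤
        |∑ i ∈ Finset.Ico ⌈n ^ (1 / (1 + 2 * β + 2 * p))⌉₊
            ⌈2 * n ^ (1 / (1 + 2 * β + 2 * p))⌉₊,
          l i * (Kamp * n ^ (-(1 / 2 + β) / (1 + 2 * β + 2 * p))) /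
            (1 + n * (i : ℝ) ^ (-(1 + 2 * α)) * (κ i) ^ 2)| := by
  have hK₀R : (0:ℝ) < K₀ := by exact_mod_cast hK₀
  set s := 1 + 2*β + 2*p with hs_def
  have hs1 : (1:ℝ) < s := by rw [hs_def]; linarith
  have hs0 : (0:ℝ) < s := by linarith
  set e₂ := (-1 - 2*q)/2 with he₂
  set c₂ := min 1 ((3:ℝ)^e₂) with hc₂
  have hc₂0 : 0 < c₂ := lt_min one_pos (rpow_pos_of_pos (by norm_num) _)
  have hC2 : (0:ℝ) < 1 + C^2 := by positivity
  set T : ℕ := 2*K₀ + j₀ + 2 with hT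
  have hTc : ((T:ℕ):ℝ) = 2*(K₀:ℝ) + (j₀:ℝ) + 2 := by rw [hT]; push_cast; ring
  have hj₀0 : (0:ℝ) ≤ (j₀:ℝ) := Nat.cast_nonneg _
  have hT1 : (1:ℝ) ≤ (T:ℝ) := by rw [hTc]; linarith
  refine ⟨Kamp * c₂ / ((1+C^2) * (2*K₀) * R),
    div_pos (mul_pos hKamp hc₂0) (mul_pos (mul_pos hC2 (by linarith)) hR),
    max 1 ((T:ℝ) ^ s), ?_⟩
  intro n hn hlnn
  have hn1 : (1:ℝ) ≤ n := le_trans (le_max_left _ _) hn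
  have hn0 : (0:ℝ) < n := lt_of_lt_of_le one_pos hn1
  set x := n ^ (1/s) with hx_def
  have hxT : (T:ℝ) ≤ x := by
    calc (T:ℝ) = ((T:ℝ)^s)^(1/s) := by
          rw [← Real.rpow_mul (le_trans zero_le_one hT1), mul_one_div_cancel hs0.ne',
            Real.rpow_one]
    _ ≤ n^(1/s) := Real.rpow_le_rpow (rpow_nonneg (le_trans zero_le_one hT1) _)
          (le_trans (le_max_right _ _) hn) (one_div_nonneg.mpr hs0.le)
  have hx1 : (1:ℝ) ≤ x := le_trans hT1 hxT
  have hx0 : (0:ℝ) < x := lt_of_lt_of_le one_pos hx1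
  set N := ⌈x⌉₊ with hN
  set M := ⌈2*x⌉₊ with hM
  have hNx : x ≤ (N:ℝ) := Nat.le_ceil x
  have hN1 : 0 < N := Nat.ceil_pos.mpr hx0
  have hNx2 : (N:ℝ) ≤ x + 1 := (Nat.ceil_lt_add_one hx0.le).le
  have hM2x : 2*x ≤ (M:ℝ) := Nat.le_ceil _
  have hM3x : (M:ℝ) ≤ 3*x := le_trans (Nat.ceil_lt_add_one (by linarith)).le (by linarith)
  have hNM : N ≤ M := Nat.ceil_le_ceil (by linarith)
  set B := (M - N) / K₀ with hB
  have hK₀0 : 0 < K₀ := hK₀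
  have hBK : N + B*K₀ ≤ M := by
    have h := Nat.div_mul_le_self (M-N) K₀
    rw [← hB] at h
    omega
  have hMB : M ≤ N + K₀*B + K₀ := by
    have h1 := Nat.div_add_mod (M-N) K₀
    have h2 : (M-N) % K₀ < K₀ := Nat.mod_lt _ hK₀0
    rw [← hB] at h1
    omega
  have hBlb : x/(2*(K₀:ℝ)) ≤ (B:ℝ) := by
    rw [div_le_iff₀ (by linarith)]
    have hMBr : (M:ℝ) ≤ (N:ℝ) + (K₀:ℝ)*(B:ℝ) + (K₀:ℝ) := by exact_mod_cast hMB
    have hxT' : 2*(K₀:ℝ) + 2 ≤ x := by rw [hTc] at hxT; linarith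
    nlinarith
  have hj₀N : j₀ < N := by
    have : (j₀:ℝ) < (N:ℝ) := by rw [hTc] at hxT; linarith
    exact_mod_cast this
  set A := Kamp * n ^ (-(1/2+β)/s) with hA
  have hA0 : 0 < A := mul_pos hKamp (rpow_pos_of_pos hn0 _)
  -- denominator bound, termwise
  have hden : ∀ i ∈ Finset.Ico N M,
      (A/(1+C^2)) * l i ≤ l i * A / (1 + n * (i:ℝ)^(-(1+2*α)) * κ i ^2) := by
    intro i hi
    obtain ⟨hiN, hiM⟩ := Finset.mem_Ico.mp hi
    have hi1 : 1 ≤ i := le_trans hN1 hiN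
    have hix : x ≤ (i:ℝ) := le_trans hNx (by exact_mod_cast hiN)
    have hi0 : (0:ℝ) < (i:ℝ) := by positivity
    have hk := (hκ i hi1).2
    have hrnn : (0:ℝ) ≤ n * (i:ℝ)^(-(1+2*α)) :=
      mul_nonneg hn0.le (rpow_nonneg hi0.le _)
    have hD0 : 0 < 1 + n * (i:ℝ)^(-(1+2*α)) * κ i ^2 := by
      nlinarith [mul_nonneg hrnn (sq_nonneg (κ i))]
    have hD1 : 1 + n * (i:ℝ)^(-(1+2*α)) * κ i ^2 ≤ 1 + C^2 := by
      have h1 : n * (i:ℝ)^(-(1+2*α)) * κ i ^2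
          ≤ n * (i:ℝ)^(-(1+2*α)) * (C^2 * (i:ℝ)^(-(2*p))) := by
        exact mul_le_mul_of_nonneg_left hk hrnn
      have h2 : n * (i:ℝ)^(-(1+2*α)) * (C^2 * (i:ℝ)^(-(2*p)))
          = C^2 * (n * (i:ℝ)^(-(1+2*α) + -(2*p))) := by
        rw [Real.rpow_add hi0]; ring
      have h3 : (i:ℝ)^(-(1+2*α) + -(2*p)) ≤ x^(-(1+2*α) + -(2*p)) :=
        Real.rpow_le_rpow_of_nonpos hx0 hix (by linarith)
      have h4 : n * x^(-(1+2*α) + -(2*p)) ≤ 1 := by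
        rw [hx_def, ← Real.rpow_mul hn0.le]
        nth_rewrite 1 [← Real.rpow_one n]
        rw [← Real.rpow_add hn0]
        apply Real.rpow_le_one_of_one_le_of_nonpos hn1
        have hss : s ≤ 1+2*α+2*p := by rw [hs_def]; linarith
        have hdiv : (1:ℝ) ≤ (1+2*α+2*p)/s := (one_le_div hs0).mpr hss
        have hre : 1 + 1/s * (-(1+2*α) + -(2*p)) = 1 - (1+2*α+2*p)/s := by ring
        rw [hre]
        linarith
      have h5 : C^2 * (n * (i:ℝ)^(-(1+2*α) + -(2*p))) ≤ C^2 * (n * x^(-(1+2*α) + -(2*p))) :=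
        mul_le_mul_of_nonneg_left (mul_le_mul_of_nonneg_left h3 hn0.le) (sq_nonneg C)
      have h6 : C^2 * (n * x^(-(1+2*α) + -(2*p))) ≤ C^2 * 1 :=
        mul_le_mul_of_nonneg_left h4 (sq_nonneg C)
      linarith [h1, h2, h5, h6]
    have key : l i * A / (1+C^2) ≤ l i * A / (1 + n * (i:ℝ)^(-(1+2*α)) * κ i ^2) := by
      apply div_le_div_of_nonneg_left (mul_nonneg (hlnn i hi) hA0.le) hD0 hD1
    calc (A/(1+C^2)) * l i = l i * A / (1+C^2) := by ring
    _ ≤ _ := key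
  have hsum1 : (A/(1+C^2)) * ∑ i ∈ Finset.Ico N M, l i
      ≤ ∑ i ∈ Finset.Ico N M,
          l i * A / (1 + n * (i:ℝ)^(-(1+2*α)) * κ i ^2) := by
    rw [Finset.mul_sum]
    exact Finset.sum_le_sum hden
  have hsub : ∑ i ∈ Finset.Ico N (N+B*K₀), l i ≤ ∑ i ∈ Finset.Ico N M, l i :=
    Finset.sum_le_sum_of_subset_of_nonneg
      (Finset.Ico_subset_Ico le_rfl hBK) (fun i hi _ => hlnn i hi)
  have hblocks : (B:ℝ) * (R⁻¹ * (c₂ * x^e₂)) ≤ ∑ i ∈ Finset.Ico N (N+B*K₀), l i := by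
    rw [blk_sum l N K₀ hK₀ B]
    calc (B:ℝ) * (R⁻¹ * (c₂ * x^e₂))
        = ∑ _k ∈ Finset.range B, (R⁻¹ * (c₂ * x^e₂)) := by
          rw [Finset.sum_const, Finset.card_range, nsmul_eq_mul]
    _ ≤ _ := by
        apply Finset.sum_le_sum
        intro k hk
        have hkB : k < B := Finset.mem_range.mp hk
        have hkk : k*K₀ + K₀ ≤ B*K₀ := by
          have h := Nat.mul_le_mul_right K₀ (Nat.succ_le_of_lt hkB)
          rwa [Nat.succ_mul] at h
        set j := N + k*K₀ with hj
        have hjN : N ≤ j := Nat.le_add_right _ _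
        have hj0 : 0 < j := lt_of_lt_of_le hN1 hjN
        have hjj₀ : j₀ < j := lt_of_lt_of_le hj₀N hjN
        have hjM : (j:ℝ) ≤ 3*x := by
          have : j ≤ M := by omega
          calc (j:ℝ) ≤ (M:ℝ) := by exact_mod_cast this
          _ ≤ 3*x := hM3x
        have hxj : x ≤ (j:ℝ) := le_trans hNx (by exact_mod_cast hjN)
        have hblocksub : Finset.Icc j (j+K₀-1) ⊆ Finset.Ico N M := by
          intro i hi
          rw [Finset.mem_Icc] at hi
          rw [Finset.mem_Ico]
          omega
        have hnnblk : ∀ i ∈ Finset.Icc j (j+K₀-1), 0 ≤ l i :=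
          fun i hi => hlnn i (hblocksub hi)
        have hlb := block_lb l R q hR K₀ j hj0 (hl j hjj₀) hnnblk
        refine le_trans ?_ hlb
        rw [he₂]
        apply mul_le_mul_of_nonneg_left _ (inv_nonneg.2 hR.le)
        rw [← he₂]
        calc c₂ * x^e₂ ≤ (j:ℝ)^e₂ := by
              rw [hc₂]; exact rpow_ratio_bound x (j:ℝ) e₂ hx1 hxj hjM
        _ = (j:ℝ)^((-1-2*q)/2) := by rw [he₂]
  -- final assembly
  have hpos1 : (0:ℝ) ≤ A/(1+C^2) := by positivity
  have hpos2 : (0:ℝ) ≤ R⁻¹ * (c₂ * x^e₂) :=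
    mul_nonneg (inv_nonneg.2 hR.le) (mul_nonneg hc₂0.le (rpow_nonneg hx0.le _))
  have hmerge : n ^ (-(1/2+β)/s) * (x * x^e₂) = n ^ (-(β+q)/s) := by
    rw [hx_def, ← Real.rpow_mul hn0.le (1/s) e₂, ← Real.rpow_add hn0 (1/s),
      ← Real.rpow_add hn0]
    congr 1
    rw [he₂]
    field_simp
    ring
  calc Kamp * c₂ / ((1+C^2) * (2*K₀) * R) * n ^ (-(β+q)/s)
      = (A/(1+C^2)) * ((x/(2*K₀)) * (R⁻¹ * (c₂ * x^e₂))) := by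
        rw [← hmerge, hA]
        field_simp [hR.ne', hC2.ne', hK₀R.ne']
    _ ≤ (A/(1+C^2)) * ((B:ℝ) * (R⁻¹ * (c₂ * x^e₂))) := by
        apply mul_le_mul_of_nonneg_left _ hpos1
        exact mul_le_mul_of_nonneg_right hBlb hpos2
    _ ≤ (A/(1+C^2)) * ∑ i ∈ Finset.Ico N (N+B*K₀), l i :=
        mul_le_mul_of_nonneg_left hblocks hpos1
    _ ≤ (A/(1+C^2)) * ∑ i ∈ Finset.Ico N M, l i :=
        mul_le_mul_of_nonneg_left hsub hpos1
    _ ≤ ∑ i ∈ Finset.Ico N M, l i * A / (1 + n * (i:ℝ)^(-(1+2*α)) * κ i ^2) := hsum1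
    _ ≤ |∑ i ∈ Finset.Ico N M, l i * A / (1 + n * (i:ℝ)^(-(1+2*α)) * κ i ^2)| :=
        le_abs_self _
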